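/- arXiv:1811.00214 — 12 statements merged into one kernel-verified Lean document; each statement's English description precedes it below -/
import Mathlib

section
/- Let T be a monad on a category C in which idempotents split. If (X,x) is a T-semialgebra and the idempotent x ∘ η_X splits in the category of T-semialgebras as x ∘ η_X = i ∘ p with p ∘ i = 1 on an object (Y,y), then (Y,y) is a genuine T-algebra, i.e. it also satisfies the unit axiom y ∘ η_Y = 1_Y. -/
open CategoryTheory

/-- If `(X,x)` is a `T`-semialgebra and the idempotent `x ∘ η_X` splits in the
category of `T`-semialgebras as `x ∘ η_X = i ∘ p` with `p ∘ i = 1` on a semialgebra `(Y,y)`,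
then `(Y,y)` satisfies the unit axiom, i.e. it is a genuine `T`-algebra. -/
theorem splitting_of_semialgebra_idempotent_is_algebra {C : Type*} [Category C] (T : Monad C)
    (X Y : C) (x : T.obj X ⟶ X) (y : T.obj Y ⟶ Y)
    (hx : T.map x ≫ x = T.μ.app X ≫ x) (hy : T.map y ≫ y = T.μ.app Y ≫ y)
    (p : X ⟶ Y) (i : Y ⟶ X)
    (hp : T.map p ≫ y = x ≫ p) (hi : T.map i ≫ x = y ≫ i)
    (hsplit : p ≫ i = T.η.app X ≫ x) (hpi : i ≫ p = 𝟙 Y) :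
    T.η.app Y ≫ y = 𝟙 Y := by
  have h1 : T.η.app Y ≫ y ≫ i = i := by
    have hn : i ≫ T.η.app X = T.η.app Y ≫ T.map i := by
      simpa using T.η.naturality i
    calc T.η.app Y ≫ y ≫ i = (T.η.app Y ≫ T.map i) ≫ x := by
          rw [← hi]; simp
      _ = i ≫ T.η.app X ≫ x := by rw [← hn]; simp
      _ = i ≫ p ≫ i := by rw [← hsplit]
      _ = (i ≫ p) ≫ i := by simp
      _ = i := by rw [hpi]; simp
  calc T.η.app Y ≫ y = T.η.app Y ≫ y ≫ i ≫ p := by rw [hpi]; simp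
    _ = (T.η.app Y ≫ y ≫ i) ≫ p := by simp
    _ = i ≫ p := by rw [h1]
    _ = 𝟙 Y := hpi
end

section
/- Let T be a monad on C with idempotents split in C. The full inclusion I of the category of T-algebras into the category of T-semialgebras has a functor K in the other direction that is simultaneously left and right adjoint to I, where K(X,x) is obtained by splitting the idempotent x ∘ η_X. -/
open CategoryTheory

universe v u

variable {C : Type u} [Category.{v} C]

/-- A semialgebra for a monad: only the associativity axiom is required. -/
structure Semialgebra (T : Monad C) : Type max u v where
  A : C
  a : T.obj A ⟶ A
  assoc : T.map a ≫ a = T.μ.app A ≫ a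

/-- Morphisms of semialgebras. -/
@[ext]
structure SemialgebraHom {T : Monad C} (M N : Semialgebra T) where
  f : M.A ⟶ N.A
  h : T.map f ≫ N.a = M.a ≫ f

instance {T : Monad C} : Category (Semialgebra T) where
  Hom := SemialgebraHom
  id M := ⟨𝟙 M.A, by simp⟩
  comp {M N P} f g :=
    ⟨f.f ≫ g.f, by rw [Functor.map_comp, Category.assoc, g.h, ← Category.assoc, f.h,
      Category.assoc]⟩
  id_comp f := by apply SemialgebraHom.ext; simp [Category.id_comp]
  comp_id f := by apply SemialgebraHom.ext; simp [Category.comp_id]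
  assoc f g h := by apply SemialgebraHom.ext; simp [Category.assoc]

/-- The full inclusion of `T`-algebras into `T`-semialgebras. -/
def semialgebraInclusion (T : Monad C) : Monad.Algebra T ⥤ Semialgebra T where
  obj A := ⟨A.A, A.a, A.assoc.symm⟩
  map f := ⟨f.f, f.h⟩
  map_id _ := rfl
  map_comp _ _ := rfl

namespace SemialgAux

variable {T : Monad C}

@[simp] lemma Semialg_comp_f {M N P : Semialgebra T} (f : M ⟶ N) (g : N ⟶ P) :
    (f ≫ g).f = f.f ≫ g.f := rfl

@[simp] lemma Semialg_id_f (M : Semialgebra T) : SemialgebraHom.f (𝟙 M) = 𝟙 M.A := rfl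

/-- The canonical idempotent on a semialgebra. -/
def pMap (M : Semialgebra T) : M.A ⟶ M.A := T.η.app M.A ≫ M.a

lemma eta_nat (M : Semialgebra T) : M.a ≫ T.η.app M.A = T.η.app (T.obj M.A) ≫ T.map M.a := by
  simpa using T.η.naturality M.a

lemma a_p (M : Semialgebra T) : M.a ≫ pMap M = M.a := by
  rw [pMap]
  slice_lhs 1 2 => rw [eta_nat]
  rw [Category.assoc, M.assoc]
  slice_lhs 1 2 => rw [T.left_unit]
  simp

lemma p_idem (M : Semialgebra T) : pMap M ≫ pMap M = pMap M := by
  nth_rw 1 [pMap]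
  rw [Category.assoc, a_p, pMap]

lemma Ta_p (M : Semialgebra T) : T.map (T.η.app M.A) ≫ T.map M.a ≫ M.a = M.a := by
  rw [M.assoc]
  slice_lhs 1 2 => rw [T.right_unit]
  simp

lemma hom_p {M N : Semialgebra T} (f : M ⟶ N) : f.f ≫ pMap N = pMap M ≫ f.f := by
  have h : f.f ≫ T.η.app N.A = T.η.app M.A ≫ T.map f.f := by
    simpa using T.η.naturality f.f
  rw [pMap, pMap]
  slice_lhs 1 2 => rw [h]
  slice_lhs 2 3 => rw [f.h]
  simp [Category.assoc]

lemma p_alg (A : Monad.Algebra T) :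
    pMap ((semialgebraInclusion T).obj A) = 𝟙 ((semialgebraInclusion T).obj A).A := by
  simpa [pMap, semialgebraInclusion] using A.unit

/-- A chosen splitting of the idempotent `pMap M`. -/
structure Splitting (M : Semialgebra T) where
  B : C
  i : B ⟶ M.A
  e : M.A ⟶ B
  hie : i ≫ e = 𝟙 B
  hei : e ≫ i = pMap M

variable [IsIdempotentComplete C]

noncomputable def spl (M : Semialgebra T) : Splitting M := by
  have h := IsIdempotentComplete.idempotents_split M.A (pMap M) (p_idem M)
  exact ⟨h.choose, h.choose_spec.choose, h.choose_spec.choose_spec.choose,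
    h.choose_spec.choose_spec.choose_spec.1, h.choose_spec.choose_spec.choose_spec.2⟩

lemma p_e (M : Semialgebra T) : pMap M ≫ (spl M).e = (spl M).e := by
  rw [← (spl M).hei, Category.assoc, (spl M).hie, Category.comp_id]

lemma i_p (M : Semialgebra T) : (spl M).i ≫ pMap M = (spl M).i := by
  rw [← (spl M).hei, ← Category.assoc, (spl M).hie, Category.id_comp]

lemma Tei (M : Semialgebra T) :
    T.map (spl M).e ≫ T.map (spl M).i = T.map (T.η.app M.A) ≫ T.map M.a := by
  rw [← Functor.map_comp, (spl M).hei, pMap, Functor.map_comp]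

/-- The algebra obtained by splitting the idempotent. -/
noncomputable def Kobj (M : Semialgebra T) : Monad.Algebra T where
  A := (spl M).B
  a := T.map (spl M).i ≫ M.a ≫ (spl M).e
  unit := by
    have h : T.η.app (spl M).B ≫ T.map (spl M).i = (spl M).i ≫ T.η.app M.A := by
      simpa using (T.η.naturality (spl M).i).symm
    slice_lhs 1 2 => rw [h]
    slice_lhs 2 3 => rw [show T.η.app M.A ≫ M.a = pMap M from rfl]
    slice_lhs 2 3 => rw [p_e]
    exact (spl M).hie
  assoc := by
    have nat : T.μ.app (spl M).B ≫ T.map (spl M).i = T.map (T.map (spl M).i) ≫ T.μ.app M.A :=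
      (T.μ.naturality (spl M).i).symm
    slice_lhs 1 2 => rw [nat]
    simp only [Functor.map_comp, Category.assoc]
    slice_lhs 2 3 => rw [← M.assoc]
    slice_rhs 3 4 => rw [Tei]
    slice_rhs 3 5 => rw [Ta_p]
    simp [Category.assoc]

lemma Kobj_a (M : Semialgebra T) :
    (Kobj M).a = T.map (spl M).i ≫ M.a ≫ (spl M).e := rfl

noncomputable def Kmap {M N : Semialgebra T} (f : M ⟶ N) : Kobj M ⟶ Kobj N where
  f := (spl M).i ≫ f.f ≫ (spl N).e
  h := by
    show T.map ((spl M).i ≫ f.f ≫ (spl N).e) ≫ (T.map (spl N).i ≫ N.a ≫ (spl N).e)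
      = (T.map (spl M).i ≫ M.a ≫ (spl M).e) ≫ ((spl M).i ≫ f.f ≫ (spl N).e)
    simp only [Functor.map_comp, Category.assoc]
    slice_lhs 3 4 => rw [Tei]
    slice_lhs 3 5 => rw [Ta_p]
    slice_lhs 2 3 => rw [f.h]
    slice_rhs 3 4 => rw [(spl M).hei]
    slice_rhs 2 3 => rw [a_p]

noncomputable def Kfun (T : Monad C) [IsIdempotentComplete C] :
    Semialgebra T ⥤ Monad.Algebra T where
  obj := Kobj
  map := Kmap
  map_id M := by
    apply Monad.Algebra.Hom.ext
    show (spl M).i ≫ SemialgebraHom.f (𝟙 M) ≫ (spl M).e = 𝟙 _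
    rw [Semialg_id_f, Category.id_comp, (spl M).hie]
  map_comp {M N P} f g := by
    apply Monad.Algebra.Hom.ext
    show (spl M).i ≫ (f ≫ g).f ≫ (spl P).e
        = ((spl M).i ≫ f.f ≫ (spl N).e) ≫ ((spl N).i ≫ g.f ≫ (spl P).e)
    rw [Semialg_comp_f]
    slice_rhs 3 4 => rw [(spl N).hei]
    slice_rhs 3 4 => rw [← hom_p g]
    slice_rhs 4 5 => rw [p_e]
    simp [Category.assoc]

variable (T) in
/-- The retraction, as a map of semialgebras `I (K M) ⟶ M`. -/
noncomputable def iHom (M : Semialgebra T) :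
    (semialgebraInclusion T).obj (Kobj M) ⟶ M where
  f := (spl M).i
  h := by
    show T.map (spl M).i ≫ M.a = (T.map (spl M).i ≫ M.a ≫ (spl M).e) ≫ (spl M).i
    slice_rhs 3 4 => rw [(spl M).hei]
    slice_rhs 2 3 => rw [a_p]

variable (T) in
/-- The section, as a map of semialgebras `M ⟶ I (K M)`. -/
noncomputable def eHom (M : Semialgebra T) :
    M ⟶ (semialgebraInclusion T).obj (Kobj M) where
  f := (spl M).e
  h := by
    show T.map (spl M).e ≫ (T.map (spl M).i ≫ M.a ≫ (spl M).e) = M.a ≫ (spl M).e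
    slice_lhs 1 2 => rw [Tei]
    slice_lhs 1 3 => rw [Ta_p]

/-- The counit of `K ⊣ I`, an algebra morphism. -/
noncomputable def epsHom (A : Monad.Algebra T) :
    Kobj ((semialgebraInclusion T).obj A) ⟶ A where
  f := (spl ((semialgebraInclusion T).obj A)).i
  h := by
    have := (iHom T ((semialgebraInclusion T).obj A)).h
    exact this
  
/-- The unit of `I ⊣ K`, an algebra morphism. -/
noncomputable def etaHom (A : Monad.Algebra T) :
    A ⟶ Kobj ((semialgebraInclusion T).obj A) where
  f := (spl ((semialgebraInclusion T).obj A)).e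
  h := by
    have := (eHom T ((semialgebraInclusion T).obj A)).h
    exact this

lemma hei_alg (A : Monad.Algebra T) :
    (spl ((semialgebraInclusion T).obj A)).e ≫ (spl ((semialgebraInclusion T).obj A)).i
      = 𝟙 ((semialgebraInclusion T).obj A).A := by
  rw [(spl _).hei, p_alg]

noncomputable def adj₁ (T : Monad C) [IsIdempotentComplete C] :
    Kfun T ⊣ semialgebraInclusion T where
  unit :=
    { app := fun M => eHom T M
      naturality := fun M N f => by
        apply SemialgebraHom.ext
        show f.f ≫ (spl N).e = (spl M).e ≫ ((spl M).i ≫ f.f ≫ (spl N).e)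
        slice_rhs 1 2 => rw [(spl M).hei]
        slice_rhs 1 2 => rw [← hom_p f]
        slice_rhs 2 3 => rw [p_e] }
  counit :=
    { app := fun A => epsHom A
      naturality := fun A B g => by
        apply Monad.Algebra.Hom.ext
        show ((spl ((semialgebraInclusion T).obj A)).i
            ≫ ((semialgebraInclusion T).map g).f
            ≫ (spl ((semialgebraInclusion T).obj B)).e)
            ≫ (spl ((semialgebraInclusion T).obj B)).i
            = (spl ((semialgebraInclusion T).obj A)).i ≫ ((semialgebraInclusion T).map g).f
        rw [Category.assoc, Category.assoc, hei_alg B, Category.comp_id] }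
  left_triangle_components M := by
    apply Monad.Algebra.Hom.ext
    show ((spl M).i ≫ (spl M).e ≫ (spl ((semialgebraInclusion T).obj (Kobj M))).e)
        ≫ (spl ((semialgebraInclusion T).obj (Kobj M))).i = 𝟙 (spl M).B
    exact ((Category.assoc _ _ _).trans (congrArg (fun t => (spl M).i ≫ t)
      ((Category.assoc _ _ _).trans ((congrArg (fun t => (spl M).e ≫ t)
        (hei_alg (Kobj M))).trans (Category.comp_id _))))).trans (spl M).hie
  right_triangle_components A := by
    apply SemialgebraHom.ext
    show (spl ((semialgebraInclusion T).obj A)).e ≫ (spl ((semialgebraInclusion T).obj A)).i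
        = 𝟙 A.A
    exact hei_alg A

noncomputable def adj₂ (T : Monad C) [IsIdempotentComplete C] :
    semialgebraInclusion T ⊣ Kfun T where
  unit :=
    { app := fun A => etaHom A
      naturality := fun A B g => by
        apply Monad.Algebra.Hom.ext
        show ((semialgebraInclusion T).map g).f ≫ (spl ((semialgebraInclusion T).obj B)).e
            = (spl ((semialgebraInclusion T).obj A)).e
            ≫ ((spl ((semialgebraInclusion T).obj A)).i
              ≫ ((semialgebraInclusion T).map g).f
              ≫ (spl ((semialgebraInclusion T).obj B)).e)
        rw [← Category.assoc, hei_alg A, Category.id_comp] }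
  counit :=
    { app := fun M => iHom T M
      naturality := fun M N f => by
        apply SemialgebraHom.ext
        show ((spl M).i ≫ f.f ≫ (spl N).e) ≫ (spl N).i = (spl M).i ≫ f.f
        slice_lhs 3 4 => rw [(spl N).hei]
        slice_lhs 2 3 => rw [hom_p f]
        slice_lhs 1 2 => rw [i_p] }
  left_triangle_components A := by
    apply SemialgebraHom.ext
    show (spl ((semialgebraInclusion T).obj A)).e ≫ (spl ((semialgebraInclusion T).obj A)).i
        = 𝟙 A.A
    exact hei_alg A
  right_triangle_components M := by
    apply Monad.Algebra.Hom.ext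
    show (spl ((semialgebraInclusion T).obj (Kobj M))).e
        ≫ ((spl ((semialgebraInclusion T).obj (Kobj M))).i ≫ (spl M).i ≫ (spl M).e)
        = 𝟙 (spl M).B
    rw [← Category.assoc, hei_alg (Kobj M), Category.id_comp]
    exact (spl M).hie

end SemialgAux

/-- if idempotents split in `C`, the full inclusion
`I : C^T → C^T_s` has a simultaneous left and right adjoint `K`, where `K(X,x)` is
obtained by splitting the idempotent `x ∘ η_X`. -/
theorem inclusion_has_two_sided_adjoint (T : Monad C) [IsIdempotentComplete C] :
    ∃ K : Semialgebra T ⥤ Monad.Algebra T,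
      Nonempty (K ⊣ semialgebraInclusion T) ∧
      Nonempty (semialgebraInclusion T ⊣ K) ∧
      ∀ M : Semialgebra T,
        ∃ (p : M ⟶ (semialgebraInclusion T).obj (K.obj M))
          (i : (semialgebraInclusion T).obj (K.obj M) ⟶ M),
          i ≫ p = 𝟙 _ ∧ (p ≫ i).f = T.η.app M.A ≫ M.a := by
  refine ⟨SemialgAux.Kfun T, ⟨SemialgAux.adj₁ T⟩, ⟨SemialgAux.adj₂ T⟩, fun M => ?_⟩
  refine ⟨SemialgAux.eHom T M, SemialgAux.iHom T M, ?_, ?_⟩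
  · apply SemialgebraHom.ext
    show (SemialgAux.spl M).i ≫ (SemialgAux.spl M).e = 𝟙 _
    exact (SemialgAux.spl M).hie
  · show (SemialgAux.spl M).e ≫ (SemialgAux.spl M).i = _
    exact (SemialgAux.spl M).hei
end

section
/- The multiplication μ of the finite power-set monad is weakly cartesian: for every function f : X → Y, finite subset A ⊆ X, and finite subset B = {B₁,…,Bₙ} of finite subsets of Y with f(A) = B₁ ∪ ⋯ ∪ Bₙ, there exist finitely many subsets C₁,…,Cₙ of X with A = C₁ ∪ ⋯ ∪ Cₙ and {f(C₁),…,f(Cₙ)} = {B₁,…,Bₙ}. -/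
/-- The multiplication of the finite power-set monad is weakly cartesian:
for every `f : X → Y`, finite `A ⊆ X` and finite family `B` of finite subsets of `Y` with
`f(A) = ⋃ B`, there is a finite family `C` of finite subsets of `X` with `A = ⋃ C` and
whose family of images is exactly `B`. -/
theorem finite_powerset_multiplication_weakly_cartesian {X Y : Type*}
    [DecidableEq X] [DecidableEq Y] (f : X → Y)
    (A : Finset X) (B : Finset (Finset Y)) (h : A.image f = B.sup id) :
    ∃ C : Finset (Finset X), C.sup id = A ∧ C.image (fun s => s.image f) = B := by
  refine ⟨B.image (fun b => A.filter (fun x => f x ∈ b)), ?_, ?_⟩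
  · apply Finset.Subset.antisymm
    · intro x hx
      simp only [Finset.mem_sup, Finset.mem_image, id] at hx
      obtain ⟨s, ⟨b, _, rfl⟩, hxs⟩ := hx
      exact (Finset.mem_filter.mp hxs).1
    · intro x hx
      have hfx : f x ∈ B.sup id := h ▸ Finset.mem_image_of_mem f hx
      simp only [Finset.mem_sup, id] at hfx
      obtain ⟨b, hb, hfb⟩ := hfx
      simp only [Finset.mem_sup, Finset.mem_image, id]
      exact ⟨A.filter (fun x => f x ∈ b), ⟨b, hb, rfl⟩, Finset.mem_filter.mpr ⟨hx, hfb⟩⟩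
  · rw [Finset.image_image]
    have key : ∀ b ∈ B, (A.filter (fun x => f x ∈ b)).image f = b := by
      intro b hb
      apply Finset.Subset.antisymm
      · intro y hy
        obtain ⟨x, hx, rfl⟩ := Finset.mem_image.mp hy
        exact (Finset.mem_filter.mp hx).2
      · intro y hy
        have : y ∈ A.image f := h ▸ Finset.le_sup (f := id) hb hy
        obtain ⟨x, hx, rfl⟩ := Finset.mem_image.mp this
        exact Finset.mem_image_of_mem f (Finset.mem_filter.mpr ⟨hx, hy⟩)
    calc B.image (fun b => (A.filter (fun x => f x ∈ b)).image f)
        = B.image id := Finset.image_congr (fun b hb => key b hb)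
      _ = B := Finset.image_id
end

section
/- For a set X, the map δ_X sending an ultrafilter 𝐅 on PX to the set {F ∈ βX : ⋃𝒜 ∈ F for all 𝒜 ∈ 𝐅} satisfies the compatibility with the unit of the power-set monad: δ_X(β(η_X)(G)) consists of exactly the ultrafilters containing every member of G, for G an ultrafilter on X; in particular δ_X(β(η_X)(G)) = {G}. -/
/-- The canonical weak distributive law `δ_X : βPX → PβX`:
`δ_X(𝐅) = { F ∈ βX : ⋃𝒜 ∈ F for all 𝒜 ∈ 𝐅 }`. -/
def ultrafilterPowersetDelta (X : Type*) (FF : Ultrafilter (Set X)) : Set (Ultrafilter X) :=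
  {F : Ultrafilter X | ∀ 𝒜 ∈ FF, ⋃₀ 𝒜 ∈ F}

theorem delta_unit_aux {X : Type*} (G : Ultrafilter X) :
    ultrafilterPowersetDelta X (Ultrafilter.map (fun x => ({x} : Set X)) G)
      = {F : Ultrafilter X | ∀ A ∈ G, A ∈ F} := by
  ext F
  simp only [ultrafilterPowersetDelta, Set.mem_setOf_eq, Ultrafilter.mem_map]
  constructor
  · intro h A hA
    have := h ((fun x => ({x} : Set X)) '' A) ?_
    · have : ⋃₀ ((fun x => ({x} : Set X)) '' A) = A := by
        ext y; simp
      rwa [this] at ‹⋃₀ ((fun x => ({x} : Set X)) '' A) ∈ F›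
    · exact Filter.mem_of_superset hA (Set.subset_preimage_image _ _)
  · intro h 𝒜 h𝒜
    have hsub : (fun x => ({x} : Set X)) ⁻¹' 𝒜 ⊆ ⋃₀ 𝒜 := by
      intro x hx
      exact ⟨{x}, hx, rfl⟩
    exact Filter.mem_of_superset (h _ h𝒜) hsub

/-- `δ_X` is compatible with the unit of the power-set monad:
for an ultrafilter `G` on `X`, `δ_X(β(η_X)(G))` consists of exactly the ultrafilters
containing every member of `G`; in particular it equals `{G}`. -/
theorem delta_unit_compatibility {X : Type*} (G : Ultrafilter X) :
    ultrafilterPowersetDelta X (Ultrafilter.map (fun x => ({x} : Set X)) G)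
      = {F : Ultrafilter X | ∀ A ∈ G, A ∈ F} ∧
    ultrafilterPowersetDelta X (Ultrafilter.map (fun x => ({x} : Set X)) G)
      = {G} := by
  refine ⟨delta_unit_aux G, ?_⟩
  rw [delta_unit_aux G]
  ext F
  simp only [Set.mem_setOf_eq, Set.mem_singleton_iff]
  constructor
  · intro h
    have hle : (F : Filter X) ≤ (G : Filter X) := fun s hs => h s hs
    exact Ultrafilter.coe_injective (le_antisymm hle (G.unique hle).ge)
  · rintro rfl A hA; exact hA
end

section
/- Let X be a compact Hausdorff space with ultrafilter-convergence map ξ : βX → X (sending each ultrafilter to its unique limit). For any ultrafilter 𝐅 on PX, the set {ξ(F) : F an ultrafilter on X such that ⋃𝒜 ∈ F for all 𝒜 ∈ 𝐅} equals the intersection over 𝒜 ∈ 𝐅 of the closures of the unions ⋃𝒜. -/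
/-- Let `X` be compact Hausdorff with ultrafilter-convergence map `ξ`.
For any ultrafilter `𝐅` on `PX`, the set of limits `ξ(F)` of ultrafilters `F` on `X`
containing `⋃𝒜` for every `𝒜 ∈ 𝐅` equals `⋂_{𝒜 ∈ 𝐅} closure(⋃𝒜)`. -/
theorem semialgebra_structure_on_powerset {X : Type*}
    [TopologicalSpace X] [CompactSpace X] [T2Space X]
    (ξ : Ultrafilter X → X) (hξ : ∀ F : Ultrafilter X, (F : Filter X) ≤ nhds (ξ F))
    (FF : Ultrafilter (Set X)) :
    {x : X | ∃ F : Ultrafilter X, (∀ 𝒜 ∈ FF, ⋃₀ 𝒜 ∈ F) ∧ ξ F = x}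
      = ⋂ 𝒜 ∈ FF, closure (⋃₀ 𝒜) := by
  ext x
  simp only [Set.mem_setOf_eq, Set.mem_iInter]
  constructor
  · rintro ⟨F, hF, rfl⟩ 𝒜 h𝒜
    exact mem_closure_iff_clusterPt.mpr
      (ClusterPt.mono (ClusterPt.of_le_nhds' (hξ F) F.neBot)
        (Filter.le_principal_iff.mpr (hF 𝒜 h𝒜)))
  · intro hx
    set G : Filter X := Filter.lift' (FF : Filter (Set X)) Set.sUnion with hG
    have hmono : Monotone (Set.sUnion : Set (Set X) → Set X) :=
      fun _ _ h => Set.sUnion_subset_sUnion h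
    have hmemG : ∀ s, s ∈ G ↔ ∃ 𝒜 ∈ FF, ⋃₀ 𝒜 ⊆ s := by
      intro s
      exact Filter.mem_lift'_sets hmono
    have hne : (nhds x ⊓ G).NeBot := by
      rw [Filter.inf_neBot_iff]
      intro U hU s hs
      obtain ⟨𝒜, h𝒜, hsub⟩ := (hmemG s).mp hs
      have := mem_closure_iff_nhds.mp (hx 𝒜 h𝒜) U hU
      exact this.mono (Set.inter_subset_inter_right U hsub)
    obtain ⟨F, hF⟩ := Filter.exists_ultrafilter_le (nhds x ⊓ G)
    refine ⟨F, fun 𝒜 h𝒜 => hF (Filter.mem_inf_of_right ((hmemG _).mpr ⟨𝒜, h𝒜, le_rfl⟩)), ?_⟩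
    have h1 : (F : Filter X) ≤ nhds x := hF.trans inf_le_left
    exact tendsto_nhds_unique (hξ F) h1
end

section
/- In a continuous lattice L with the Lawson topology, every ultrafilter F converges to the point liminf F = sup{inf A : A ∈ F}, and this limit is unique. -/
/-- The way-below relation: `s ≪ x` iff for every nonempty directed `D` with `x ≤ sup D`
there is `d ∈ D` with `s ≤ d`. -/
def WayBelow {L : Type*} [CompleteLattice L] (s x : L) : Prop :=
  ∀ D : Set L, D.Nonempty → DirectedOn (· ≤ ·) D → x ≤ sSup D → ∃ d ∈ D, s ≤ d

/-- The Lawson topology on a complete lattice, generated by the subbasic open sets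
`s⁺ = {x | s ≪ x}` and `s⁻ = {x | ¬ s ≤ x}`. -/
def lawsonTopology (L : Type*) [CompleteLattice L] : TopologicalSpace L :=
  TopologicalSpace.generateFrom
    {U : Set L | (∃ s : L, U = {x | WayBelow s x}) ∨ (∃ s : L, U = {x | ¬ s ≤ x})}

section Aux

variable {L : Type*} [CompleteLattice L]

lemma wayBelow_le {s x : L} (h : WayBelow s x) : s ≤ x := by
  obtain ⟨d, hd, hsd⟩ := h {x} ⟨x, rfl⟩
    (directedOn_singleton x) (le_sSup rfl)
  cases hd
  exact hsd

lemma bot_wayBelow (x : L) : WayBelow ⊥ x :=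
  fun _ ⟨d, hd⟩ _ _ => ⟨d, hd, bot_le⟩

lemma WayBelow.mono_left {s' s x : L} (hs : s' ≤ s) (h : WayBelow s x) : WayBelow s' x :=
  fun D hne hdir hle => (h D hne hdir hle).imp fun d ⟨hd, hsd⟩ => ⟨hd, hs.trans hsd⟩

lemma WayBelow.mono_right {s x y : L} (h : WayBelow s x) (hxy : x ≤ y) : WayBelow s y :=
  fun D hne hdir hle => h D hne hdir (hxy.trans hle)

lemma sup_wayBelow {s t x : L} (hs : WayBelow s x) (ht : WayBelow t x) :
    WayBelow (s ⊔ t) x := by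
  intro D hne hdir hle
  obtain ⟨d₁, hd₁, hsd₁⟩ := hs D hne hdir hle
  obtain ⟨d₂, hd₂, hsd₂⟩ := ht D hne hdir hle
  obtain ⟨d, hd, h1, h2⟩ := hdir d₁ hd₁ d₂ hd₂
  exact ⟨d, hd, sup_le (hsd₁.trans h1) (hsd₂.trans h2)⟩

/-- Interpolation property of the way-below relation in a continuous lattice. -/
lemma wayBelow_interpolate (hcont : ∀ x : L, x = sSup {s : L | WayBelow s x})
    {s x : L} (h : WayBelow s x) : ∃ t, WayBelow s t ∧ WayBelow t x := by
  set D : Set L := {u | ∃ t, WayBelow u t ∧ WayBelow t x} with hD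
  have hne : D.Nonempty := ⟨⊥, ⊥, bot_wayBelow _, bot_wayBelow _⟩
  have hdir : DirectedOn (· ≤ ·) D := by
    rintro u₁ ⟨t₁, h1, h1x⟩ u₂ ⟨t₂, h2, h2x⟩
    refine ⟨u₁ ⊔ u₂, ⟨t₁ ⊔ t₂, sup_wayBelow (h1.mono_right le_sup_left)
      (h2.mono_right le_sup_right), sup_wayBelow h1x h2x⟩, le_sup_left, le_sup_right⟩
  have hx : x ≤ sSup D := by
    calc x = sSup {t : L | WayBelow t x} := hcont x
    _ ≤ sSup D := by
        apply sSup_le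
        intro t ht
        calc t = sSup {u : L | WayBelow u t} := hcont t
        _ ≤ sSup D := sSup_le fun u hu => le_sSup ⟨t, hu, ht⟩
  obtain ⟨d, ⟨t, hdt, htx⟩, hsd⟩ := h D hne hdir hx
  exact ⟨t, hdt.mono_left hsd, htx⟩

end Aux

/-- In a continuous lattice `L` with the Lawson topology, every ultrafilter
`F` converges to the point `liminf F = sup{inf A : A ∈ F}`, and this limit is unique. -/
theorem ultrafilter_converges_to_liminf {L : Type*} [CompleteLattice L]
    (hcont : ∀ x : L, x = sSup {s : L | WayBelow s x}) (F : Ultrafilter L) :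
    (F : Filter L) ≤ @nhds L (lawsonTopology L) (sSup (sInf '' {A : Set L | A ∈ F})) ∧
    ∀ y : L, (F : Filter L) ≤ @nhds L (lawsonTopology L) y →
      y = sSup (sInf '' {A : Set L | A ∈ F}) := by
  set ℓ : L := sSup (sInf '' {A : Set L | A ∈ F}) with hℓ
  -- convergence in the generated topology is detected on subbasic sets
  have conv_iff : ∀ y : L, (F : Filter L) ≤ @nhds L (lawsonTopology L) y ↔
      ∀ U : Set L,
        ((∃ s : L, U = {x | WayBelow s x}) ∨ (∃ s : L, U = {x | ¬ s ≤ x})) →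
        y ∈ U → U ∈ F := by
    intro y
    show (F : Filter L) ≤ @nhds L (TopologicalSpace.generateFrom _) y ↔ _
    rw [TopologicalSpace.nhds_generateFrom, le_iInf₂_iff]
    constructor
    · intro h U hU hyU
      exact Filter.le_principal_iff.mp (h U ⟨hyU, hU⟩)
    · rintro h U ⟨hyU, hU⟩
      exact Filter.le_principal_iff.mpr (h U hU hyU)
  -- the set of infima is directed and nonempty
  have hne : (sInf '' {A : Set L | A ∈ F}).Nonempty :=
    ⟨sInf Set.univ, Set.univ, Filter.univ_mem, rfl⟩
  have hdir : DirectedOn (· ≤ ·) (sInf '' {A : Set L | A ∈ F}) := by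
    rintro _ ⟨A, hA, rfl⟩ _ ⟨B, hB, rfl⟩
    exact ⟨sInf (A ∩ B), ⟨A ∩ B, F.inter_mem hA hB, rfl⟩,
      sInf_le_sInf Set.inter_subset_left, sInf_le_sInf Set.inter_subset_right⟩
  constructor
  · -- convergence to ℓ
    rw [conv_iff]
    rintro U (⟨s, rfl⟩ | ⟨s, rfl⟩) hmem
    · -- U = {x | s ≪ x}, with s ≪ ℓ
      have hs : WayBelow s ℓ := hmem
      obtain ⟨t, hst, htl⟩ := wayBelow_interpolate hcont hs
      obtain ⟨_, ⟨A, hA, rfl⟩, htA⟩ := htl _ hne hdir le_rfl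
      refine Filter.mem_of_superset hA fun x hx => ?_
      exact hst.mono_right (htA.trans (sInf_le hx))
    · -- U = {x | ¬ s ≤ x}, with ¬ s ≤ ℓ
      have hs : ¬ s ≤ ℓ := hmem
      rcases F.mem_or_compl_mem {x | s ≤ x} with hmem' | hmem'
      · refine absurd (le_trans (le_sInf fun x hx => hx) (le_sSup ?_)) hs
        exact ⟨{x : L | s ≤ x}, hmem', rfl⟩
      · exact hmem'
  · -- uniqueness
    intro y hFy
    rw [conv_iff] at hFy
    apply le_antisymm
    · -- y ≤ ℓ
      calc y = sSup {s : L | WayBelow s y} := hcont y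
      _ ≤ ℓ := by
          apply sSup_le
          intro s hs
          have hU : {x : L | WayBelow s x} ∈ F :=
            hFy _ (Or.inl ⟨s, rfl⟩) hs
          calc s ≤ sInf {x : L | WayBelow s x} :=
            le_sInf fun x hx => wayBelow_le hx
          _ ≤ ℓ := le_sSup ⟨_, hU, rfl⟩
    · -- ℓ ≤ y
      apply sSup_le
      rintro _ ⟨A, hA, rfl⟩
      by_contra hno
      have hU : {x : L | ¬ sInf A ≤ x} ∈ F :=
        hFy _ (Or.inr ⟨sInf A, rfl⟩) hno
      obtain ⟨x, hx⟩ := F.nonempty_of_mem (Filter.inter_mem hA hU)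
      exact hx.2 (sInf_le hx.1)
end

section
/- Let X be a complete lattice carrying a compact Hausdorff topology such that liminf F = inf(adh F) for every filter F on X, where adh F = ⋂_{A ∈ F} closure(A). Then for every a ∈ X, the principal upset ↑a = {x : a ≤ x} and the principal downset ↓a = {x : x ≤ a} are closed subsets of X. -/
lemma adh_ultrafilter_eq_singleton {X : Type*} [TopologicalSpace X] [T2Space X]
    (U : Ultrafilter X) {l : X} (hl : ↑U ≤ nhds l) :
    (⋂ A ∈ (U : Filter X), closure A) = {l} := by
  ext x
  simp only [Set.mem_iInter, Set.mem_singleton_iff]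
  constructor
  · intro hx
    have hc : ClusterPt x (U : Filter X) :=
      clusterPt_iff_forall_mem_closure.mpr hx
    have hx' : ↑U ≤ nhds x := Ultrafilter.clusterPt_iff.mp hc
    exact tendsto_nhds_unique (f := id) (l := (U : Filter X)) hx' hl
  · rintro rfl A hA
    exact clusterPt_iff_forall_mem_closure.mp
      (ClusterPt.mono (Ultrafilter.clusterPt_iff.mpr hl) le_rfl) A hA

/-- Let `X` be a complete lattice carrying a compact Hausdorff topology such
that `liminf F = inf (adh F)` for every (proper) filter `F` on `X`, where
`adh F = ⋂_{A ∈ F} closure A` and `liminf F = sup {inf A : A ∈ F}`. Then every principal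
upset `↑a` and every principal downset `↓a` is closed. -/
theorem principal_sets_closed {X : Type*} [CompleteLattice X]
    [TopologicalSpace X] [CompactSpace X] [T2Space X]
    (h : ∀ F : Filter X, F.NeBot →
      sSup (sInf '' F.sets) = sInf (⋂ A ∈ F, closure A)) :
    ∀ a : X, IsClosed {x : X | a ≤ x} ∧ IsClosed {x : X | x ≤ a} := by
  intro a
  have key : ∀ (U : Ultrafilter X) (l : X), ↑U ≤ nhds l →
      sSup (sInf '' (U : Filter X).sets) = l := by
    intro U l hl
    rw [h U U.neBot, adh_ultrafilter_eq_singleton U hl, sInf_singleton]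
  constructor
  · rw [isClosed_iff_ultrafilter]
    intro x U hUx hmem
    have hk := key U x hUx
    have : a ≤ sSup (sInf '' (U : Filter X).sets) := by
      refine le_sSup_of_le ⟨{x : X | a ≤ x}, hmem, rfl⟩ ?_
      exact le_sInf fun b hb => hb
    rwa [hk] at this
  · rw [isClosed_iff_ultrafilter]
    intro x U hUx hmem
    have hk := key U x hUx
    have : sSup (sInf '' (U : Filter X).sets) ≤ a := by
      refine sSup_le ?_
      rintro _ ⟨A, hA, rfl⟩
      have hne : (A ∩ {x : X | x ≤ a}).Nonempty :=
        Ultrafilter.nonempty_of_mem (Filter.inter_mem hA hmem)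
      obtain ⟨y, hyA, hya⟩ := hne
      exact le_trans (sInf_le hyA) hya
    rwa [hk] at this
end

section
/- Let X be a complete lattice and a compact Hausdorff space in which all principal upsets ↑a are closed. If U ⊆ X is open and up-closed and x ∈ U, then inf U ≪ x (inf U is way below x). -/
/-- Let `X` be a complete lattice and a compact Hausdorff space in which all
principal upsets `↑a` are closed. If `U ⊆ X` is open and up-closed and `x ∈ U`, then
`inf U ≪ x`. -/
theorem inf_of_open_upperset_wayBelow {X : Type*} [CompleteLattice X]
    [TopologicalSpace X] [CompactSpace X] [T2Space X]
    (hups : ∀ a : X, IsClosed {x : X | a ≤ x})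
    (U : Set X) (hU : IsOpen U) (hupc : ∀ x ∈ U, ∀ y, x ≤ y → y ∈ U)
    (x : X) (hx : x ∈ U) :
    WayBelow (sInf U) x := by
  intro D hDne hDdir hxle
  by_contra h
  push_neg at h
  -- no element of D is in U (otherwise sInf U ≤ d)
  have hDU : ∀ d ∈ D, d ∉ U := by
    intro d hd hdU
    exact absurd (sInf_le hdU) (h d hd)
  haveI : Nonempty D := hDne.to_subtype
  -- family of closed sets ↑d ∩ Uᶜ
  set t : D → Set X := fun d => {y : X | (d : X) ≤ y} ∩ Uᶜ with ht
  have htcl : ∀ d : D, IsClosed (t d) := fun d =>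
    (hups d).inter hU.isClosed_compl
  have htn : ∀ d : D, (t d).Nonempty := fun d =>
    ⟨d, le_refl _, hDU d d.2⟩
  have htd : Directed (· ⊇ ·) t := by
    intro a b
    obtain ⟨c, hc, hac, hbc⟩ := hDdir a a.2 b b.2
    refine ⟨⟨c, hc⟩, fun y hy => ⟨hac.trans hy.1, hy.2⟩,
      fun y hy => ⟨hbc.trans hy.1, hy.2⟩⟩
  obtain ⟨y, hy⟩ := IsCompact.nonempty_iInter_of_directed_nonempty_isCompact_isClosed
    t htd htn (fun d => (htcl d).isCompact) htcl
  simp only [Set.mem_iInter] at hy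
  have hyU : y ∉ U := (hy ⟨hDne.some, hDne.some_mem⟩).2
  have hsup : sSup D ≤ y := sSup_le fun d hd => (hy ⟨d, hd⟩).1
  exact hyU (hupc x hx y (hxle.trans hsup))
end

section
/- Let X be a complete lattice with a compact Hausdorff topology such that liminf F = inf(adh F) for every filter F on X. Then X is a continuous lattice: x = sup{s : s ≪ x} for every x ∈ X. -/
open Filter Set Topology

section Aux

variable {X : Type*} [CompleteLattice X] [TopologicalSpace X] [CompactSpace X] [T2Space X]

/-- The section (tail) filter of a directed set. -/
def secF (D : Set X) : Filter X := ⨅ d ∈ D, 𝓟 {e ∈ D | d ≤ e}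

lemma secF_dir {D : Set X} (hdir : DirectedOn (· ≤ ·) D) :
    DirectedOn ((fun d => 𝓟 {e ∈ D | d ≤ e}) ⁻¹'o (· ≥ ·)) D := by
  intro a ha b hb
  obtain ⟨c, hc, hac, hbc⟩ := hdir a ha b hb
  exact ⟨c, hc, principal_mono.2 fun e he => ⟨he.1, hac.trans he.2⟩,
    principal_mono.2 fun e he => ⟨he.1, hbc.trans he.2⟩⟩

lemma mem_secF {D : Set X} (hne : D.Nonempty) (hdir : DirectedOn (· ≤ ·) D) {A : Set X} :
    A ∈ secF D ↔ ∃ d ∈ D, {e ∈ D | d ≤ e} ⊆ A := by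
  rw [secF, mem_biInf_of_directed (secF_dir hdir) hne]
  simp only [mem_principal]

lemma secF_neBot {D : Set X} (hne : D.Nonempty) (hdir : DirectedOn (· ≤ ·) D) :
    (secF D).NeBot := by
  refine ⟨fun hbot => ?_⟩
  have : (∅ : Set X) ∈ secF D := hbot ▸ mem_bot
  obtain ⟨d, hd, hsub⟩ := (mem_secF hne hdir).1 this
  exact hsub ⟨hd, le_refl d⟩

lemma sInf_sec {D : Set X} {d : X} (hd : d ∈ D) : sInf {e ∈ D | d ≤ e} = d :=
  le_antisymm (sInf_le ⟨hd, le_rfl⟩) (le_sInf fun _ he => he.2)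

lemma liminf_secF {D : Set X} (hne : D.Nonempty) (hdir : DirectedOn (· ≤ ·) D) :
    sSup (sInf '' (secF D).sets) = sSup D := by
  apply le_antisymm
  · apply sSup_le; rintro t ⟨A, hA, rfl⟩
    obtain ⟨d, hd, hsub⟩ := (mem_secF hne hdir).1 hA
    calc sInf A ≤ sInf {e ∈ D | d ≤ e} := sInf_le_sInf hsub
    _ = d := sInf_sec hd
    _ ≤ sSup D := le_sSup hd
  · apply sSup_le; intro d hd
    have hmem : {e ∈ D | d ≤ e} ∈ secF D := (mem_secF hne hdir).2 ⟨d, hd, subset_rfl⟩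
    have : sInf {e ∈ D | d ≤ e} ∈ sInf '' (secF D).sets := ⟨_, hmem, rfl⟩
    calc d = sInf {e ∈ D | d ≤ e} := (sInf_sec hd).symm
    _ ≤ sSup (sInf '' (secF D).sets) := le_sSup this

lemma adh_eq (F : Filter X) : (⋂ A ∈ F, closure A) = {z | ClusterPt z F} := by
  ext z
  simp only [mem_iInter, mem_setOf_eq, clusterPt_iff_forall_mem_closure]

variable (h : ∀ F : Filter X, F.NeBot →
  sSup (sInf '' F.sets) = sInf (⋂ A ∈ F, closure A))

include h

lemma ultra_liminf (U : Ultrafilter X) {y : X} (hy : (U : Filter X) ≤ 𝓝 y) :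
    sSup (sInf '' (U : Filter X).sets) = y := by
  have hU := h U U.neBot
  rw [adh_eq] at hU
  have hset : {z | ClusterPt z (U : Filter X)} = {y} := by
    ext z
    simp only [mem_setOf_eq, mem_singleton_iff, Ultrafilter.clusterPt_iff]
    constructor
    · intro hz
      exact tendsto_nhds_unique (f := id) (l := (U : Filter X)) hz hy
    · rintro rfl; exact hy
  rw [hset, sInf_singleton] at hU
  exact hU

lemma secF_le_nhds {D : Set X} (hne : D.Nonempty) (hdir : DirectedOn (· ≤ ·) D) :
    secF D ≤ 𝓝 (sSup D) := by
  rw [le_iff_ultrafilter]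
  intro U hU
  obtain ⟨y, -, hy⟩ := isCompact_univ.ultrafilter_le_nhds U (by simp)
  have hlim : sSup (sInf '' (U : Filter X).sets) = y := ultra_liminf h U hy
  have h1 : sSup D ≤ y := by
    rw [← hlim]
    apply sSup_le; intro d hd
    have hmemU : {e ∈ D | d ≤ e} ∈ U := hU ((mem_secF hne hdir).2 ⟨d, hd, subset_rfl⟩)
    calc d = sInf {e ∈ D | d ≤ e} := (sInf_sec hd).symm
    _ ≤ sSup (sInf '' (U : Filter X).sets) := le_sSup ⟨_, hmemU, rfl⟩
  have h2 : y ≤ sSup D := by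
    rw [← hlim]
    apply sSup_le; rintro t ⟨A, hA, rfl⟩
    obtain ⟨d0, hd0⟩ := id hne
    have hmemU : {e ∈ D | d0 ≤ e} ∈ U := hU ((mem_secF hne hdir).2 ⟨d0, hd0, subset_rfl⟩)
    have hnonempty : (A ∩ {e ∈ D | d0 ≤ e}).Nonempty :=
      Filter.nonempty_of_mem (inter_mem hA hmemU)
    obtain ⟨e, heA, heD, -⟩ := hnonempty
    exact le_trans (sInf_le heA) (le_sSup heD)
  have : y = sSup D := le_antisymm h2 h1
  rwa [this] at hy

lemma meet_cont {D : Set X} (hne : D.Nonempty) (hdir : DirectedOn (· ≤ ·) D) {x : X}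
    (hx : x ≤ sSup D) : sSup ((fun d => d ⊓ x) '' D) = x := by
  set G := secF D ⊔ pure x with hGdef
  have memG : ∀ A : Set X, A ∈ G ↔ A ∈ secF D ∧ x ∈ A := by
    intro A; rw [hGdef, mem_sup, mem_pure]
  have hGne : G.NeBot := by
    refine ⟨fun hbot => ?_⟩
    have : (∅ : Set X) ∈ G := hbot ▸ mem_bot
    exact ((memG ∅).1 this).2
  have hG := h G hGne
  have hLHS : sSup (sInf '' G.sets) = sSup ((fun d => d ⊓ x) '' D) := by
    apply le_antisymm
    · apply sSup_le; rintro t ⟨A, hA, rfl⟩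
      obtain ⟨hAF, hxA⟩ := (memG A).1 hA
      obtain ⟨d, hd, hsub⟩ := (mem_secF hne hdir).1 hAF
      have h1 : sInf A ≤ d := by
        calc sInf A ≤ sInf {e ∈ D | d ≤ e} := sInf_le_sInf hsub
        _ = d := sInf_sec hd
      exact le_trans (le_inf h1 (sInf_le hxA)) (le_sSup ⟨d, hd, rfl⟩)
    · apply sSup_le; rintro t ⟨d, hd, rfl⟩
      have hmem : {e ∈ D | d ≤ e} ∪ {x} ∈ G := by
        rw [memG]
        exact ⟨mem_of_superset ((mem_secF hne hdir).2 ⟨d, hd, subset_rfl⟩) subset_union_left,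
          mem_union_right _ rfl⟩
      have hval : sInf ({e ∈ D | d ≤ e} ∪ {x}) = d ⊓ x := by
        rw [sInf_union, sInf_singleton, sInf_sec hd]
      calc d ⊓ x = sInf ({e ∈ D | d ≤ e} ∪ {x}) := hval.symm
      _ ≤ sSup (sInf '' G.sets) := le_sSup ⟨_, hmem, rfl⟩
  have hRHS : sInf (⋂ A ∈ G, closure A) = x := by
    rw [adh_eq]
    apply le_antisymm
    · refine sInf_le ?_
      rw [mem_setOf_eq, clusterPt_iff_forall_mem_closure]
      intro A hA
      exact subset_closure ((memG A).1 hA).2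
    · apply le_sInf; intro z hz
      by_cases hzF : ClusterPt z (secF D)
      · have hF := h (secF D) (secF_neBot hne hdir)
        rw [liminf_secF hne hdir, adh_eq] at hF
        calc x ≤ sSup D := hx
        _ = sInf {z | ClusterPt z (secF D)} := hF
        _ ≤ z := sInf_le hzF
      · have hz' : ClusterPt z G := hz
        rw [clusterPt_iff_forall_mem_closure] at hz' hzF
        push_neg at hzF
        obtain ⟨A, hA, hzA⟩ := hzF
        have hmem : A ∪ {x} ∈ G :=
          (memG _).2 ⟨mem_of_superset hA subset_union_left, mem_union_right _ rfl⟩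
        have hcl := hz' _ hmem
        rw [closure_union, closure_singleton] at hcl
        rcases hcl with h1 | h1
        · exact absurd h1 hzA
        · exact le_of_eq h1.symm
  rw [hLHS, hRHS] at hG
  exact hG

lemma inf_nhds_wayBelow {x : X} {A : Set X} (hA : A ∈ 𝓝 x) : WayBelow (sInf A) x := by
  intro D hne hdir hx
  set D' := (fun d => d ⊓ x) '' D with hD'
  have hne' : D'.Nonempty := hne.image _
  have hdir' : DirectedOn (· ≤ ·) D' := by
    rintro _ ⟨a, ha, rfl⟩ _ ⟨b, hb, rfl⟩
    obtain ⟨c, hc, hac, hbc⟩ := hdir a ha b hb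
    exact ⟨c ⊓ x, ⟨c, hc, rfl⟩, inf_le_inf_right x hac, inf_le_inf_right x hbc⟩
  have hsup' : sSup D' = x := meet_cont h hne hdir hx
  have hle : secF D' ≤ 𝓝 x := hsup' ▸ secF_le_nhds h hne' hdir'
  obtain ⟨d', hd'D, hsub⟩ := (mem_secF hne' hdir').1 (hle hA)
  obtain ⟨d, hd, rfl⟩ := hd'D
  refine ⟨d, hd, ?_⟩
  have hdx : d ⊓ x ∈ A := hsub ⟨⟨d, hd, rfl⟩, le_rfl⟩
  exact le_trans (sInf_le hdx) inf_le_left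

end Aux

/-- Let `X` be a complete lattice with a compact Hausdorff topology such that
`liminf F = inf (adh F)` for every (proper) filter `F` on `X`. Then `X` is a continuous
lattice: `x = sup {s : s ≪ x}` for every `x`. -/
theorem continuous_lattice_of_liminf_eq_inf_adh {X : Type*} [CompleteLattice X]
    [TopologicalSpace X] [CompactSpace X] [T2Space X]
    (h : ∀ F : Filter X, F.NeBot →
      sSup (sInf '' F.sets) = sInf (⋂ A ∈ F, closure A)) :
    ∀ x : X, x = sSup {s : X | WayBelow s x} := by
  intro x
  apply le_antisymm
  · have hN := h (𝓝 x) (nhds_neBot)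
    rw [adh_eq] at hN
    have hset : {z | ClusterPt z (𝓝 x)} = {x} := by
      ext z
      simp only [mem_setOf_eq, mem_singleton_iff]
      constructor
      · intro hz
        haveI : (𝓝 z ⊓ 𝓝 x).NeBot := hz
        exact tendsto_nhds_unique (f := id) (l := 𝓝 z ⊓ 𝓝 x)
          (tendsto_id.mono_left inf_le_left) (tendsto_id.mono_left inf_le_right)
      · rintro rfl
        exact clusterPt_iff_forall_mem_closure.2 fun s hs => subset_closure (mem_of_mem_nhds hs)
    rw [hset, sInf_singleton] at hN
    calc x = sSup (sInf '' (𝓝 x).sets) := hN.symm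
    _ ≤ sSup {s : X | WayBelow s x} := by
        apply sSup_le_sSup
        rintro t ⟨A, hA, rfl⟩
        exact inf_nhds_wayBelow h hA
  · apply sSup_le
    intro s hs
    obtain ⟨d, hd, hsd⟩ := hs {x} ⟨x, rfl⟩
      (fun a ha b hb => ⟨x, rfl, by rw [mem_singleton_iff] at ha; rw [ha],
        by rw [mem_singleton_iff] at hb; rw [hb]⟩)
      (by rw [sSup_singleton])
    rw [mem_singleton_iff] at hd
    rwa [hd] at hsd
end

section
/- For a compact Hausdorff space X and closed subsets C ⊆ X, the Vietoris topology on the set VX of closed subsets of X — generated by the sets C⁺ = {A closed : A ∩ C = ∅} and C⁻ = {A closed : A ⊄ C} for C closed — coincides with the Lawson topology on the continuous lattice (VX, ⊇) of closed subsets ordered by reverse inclusion. -/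
open TopologicalSpace

/-- The Vietoris topology on the closed subsets of a space, generated by the subbasic open
sets `C⁺ = {A : A ∩ C = ∅}` and `C⁻ = {A : A ⊄ C}` for `C` closed. -/
def vietorisTopology (X : Type*) [TopologicalSpace X] : TopologicalSpace (Closeds X) :=
  TopologicalSpace.generateFrom
    {U : Set (Closeds X) |
      (∃ C : Closeds X, U = {A : Closeds X | (A : Set X) ∩ (C : Set X) = ∅}) ∨
      (∃ C : Closeds X, U = {A : Closeds X | ¬ (A : Set X) ⊆ (C : Set X)})}

section Aux
variable {X : Type*} [TopologicalSpace X] [CompactSpace X] [T2Space X]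

open Set OrderDual

lemma closed_nbhd_sep (x : Closeds X) {p : X} (hp : p ∉ (x : Set X)) :
    ∃ c : Closeds X, (x : Set X) ⊆ interior (c : Set X) ∧ p ∉ (c : Set X) := by
  obtain ⟨U, V, hU, hV, hxU, hpV, hUV⟩ :=
    SeparatedNhds.of_isCompact_isClosed (x.2.isCompact) (isClosed_singleton (x := p))
      (by simpa using hp)
  refine ⟨⟨Vᶜ, hV.isClosed_compl⟩, ?_, ?_⟩
  · exact (subset_interior_iff.mpr ⟨U, hU, hxU, fun q hq hq' => hUV.le_bot ⟨hq, hq'⟩⟩)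
  · simpa using hpV

lemma wayBelow_iff (s x : Closeds X) :
    WayBelow (toDual s) (toDual x) ↔ (x : Set X) ⊆ interior (s : Set X) := by
  constructor
  · intro h
    set N : Set (Closeds X) := {c | (x : Set X) ⊆ interior (c : Set X)} with hN
    obtain ⟨d, hd, hsd⟩ := h (ofDual ⁻¹' N) ⟨toDual ⊤, by simp [hN]⟩
      (fun d₁ h₁ d₂ h₂ => by
        refine ⟨toDual ((ofDual d₁ : Closeds X) ⊓ (ofDual d₂ : Closeds X)), ?_, ?_, ?_⟩
        · show (x : Set X) ⊆ interior (((ofDual d₁ : Closeds X) : Set X) ∩ ((ofDual d₂ : Closeds X) : Set X))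
          rw [interior_inter]
          exact subset_inter h₁ h₂
        · show (ofDual d₁ : Closeds X) ⊓ (ofDual d₂ : Closeds X) ≤ ofDual d₁
          exact inf_le_left
        · show (ofDual d₁ : Closeds X) ⊓ (ofDual d₂ : Closeds X) ≤ ofDual d₂
          exact inf_le_right)
      (by
        rw [← ofDual_le_ofDual, ofDual_sSup]
        show sInf (N : Set (Closeds X)) ≤ x
        rw [← SetLike.coe_subset_coe, Closeds.coe_sInf]
        intro p hp
        by_contra hpx
        obtain ⟨c, hc, hpc⟩ := closed_nbhd_sep x hpx
        exact hpc (Set.mem_iInter₂.mp hp c hc))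
    have h1 : (x : Set X) ⊆ interior (((ofDual d : Closeds X)) : Set X) := hd
    have h2 : (((ofDual d : Closeds X)) : Set X) ⊆ (s : Set X) := SetLike.coe_subset_coe.mpr hsd
    exact h1.trans (interior_mono h2)
  · intro hx D hne hdir hsup
    have hne' : Nonempty D := hne.to_subtype
    have hsub : (⋂ d : D, ((ofDual d.1 : Closeds X) : Set X)) ⊆ (x : Set X) := by
      have := (ofDual_le_ofDual.mpr hsup)
      rw [ofDual_sSup] at this
      have h' := (SetLike.coe_subset_coe.mpr this)
      rw [Closeds.coe_sInf] at h'
      intro p hp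
      rw [Set.mem_iInter] at hp
      exact h' (Set.mem_iInter₂.mpr fun c hc => hp ⟨toDual c, hc⟩)
    have key : (Set.univ : Set X) ∩
        ⋂ d : D, (((ofDual d.1 : Closeds X) : Set X) ∩ (interior (s : Set X))ᶜ) = ∅ := by
      rw [Set.univ_inter, Set.eq_empty_iff_forall_notMem]
      rintro p hp
      rw [Set.mem_iInter] at hp
      have hpx : p ∈ (x : Set X) :=
        hsub (Set.mem_iInter.mpr fun d => (hp d).1)
      exact (hp ⟨hne.choose, hne.choose_spec⟩).2 (hx hpx)
    obtain ⟨i, hi⟩ := isCompact_univ.elim_directed_family_closed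
      (fun d : D => (((ofDual d.1 : Closeds X) : Set X) ∩ (interior (s : Set X))ᶜ))
      (fun d => ((ofDual d.1 : Closeds X)).2.inter (isClosed_compl_iff.mpr isOpen_interior)) key
      (fun d₁ d₂ => by
        obtain ⟨d₃, hd₃, h₁, h₂⟩ := hdir d₁.1 d₁.2 d₂.1 d₂.2
        refine ⟨⟨d₃, hd₃⟩, ?_, ?_⟩
        · exact Set.inter_subset_inter_left _
            (SetLike.coe_subset_coe.mpr (h₁ : (ofDual d₃ : Closeds X) ≤ ofDual d₁.1))
        · exact Set.inter_subset_inter_left _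
            (SetLike.coe_subset_coe.mpr (h₂ : (ofDual d₃ : Closeds X) ≤ ofDual d₂.1)))
    refine ⟨i.1, i.2, ?_⟩
    rw [Set.univ_inter, Set.eq_empty_iff_forall_notMem] at hi
    show (ofDual i.1 : Closeds X) ≤ s
    rw [← SetLike.coe_subset_coe]
    intro p hp
    by_contra hps
    exact hi p ⟨hp, fun h => hps (interior_subset h)⟩
end Aux

/-- For a compact Hausdorff space `X`, the Vietoris topology on the set `VX`
of closed subsets of `X` coincides with the Lawson topology on the continuous lattice
`(VX, ⊇)` of closed subsets ordered by reverse inclusion. -/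
theorem vietoris_eq_lawson (X : Type*) [TopologicalSpace X] [CompactSpace X] [T2Space X] :
    vietorisTopology X = (lawsonTopology (Closeds X)ᵒᵈ : TopologicalSpace (Closeds X)ᵒᵈ) := by
  open Set OrderDual in
  apply le_antisymm
  · apply le_generateFrom
    rintro U (⟨s, rfl⟩ | ⟨s, rfl⟩)
    · have h1 : {x : (Closeds X)ᵒᵈ | WayBelow s x}
          = {A : Closeds X | (A : Set X) ∩ ((interior ((ofDual s : Closeds X) : Set X))ᶜ) = ∅} := by
        ext A
        have hiff := wayBelow_iff (X := X) (ofDual s) (ofDual A)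
        simp only [toDual_ofDual] at hiff
        show WayBelow s A ↔ ((ofDual A : Closeds X) : Set X) ∩ (interior ((ofDual s : Closeds X) : Set X))ᶜ = ∅
        rw [hiff, Set.eq_empty_iff_forall_notMem]
        constructor
        · rintro h p ⟨hpA, hpc⟩; exact hpc (h hpA)
        · intro h p hpA; by_contra hc; exact h p ⟨hpA, hc⟩
      rw [h1]
      exact TopologicalSpace.GenerateOpen.basic _
        (Or.inl ⟨⟨(interior ((ofDual s : Closeds X) : Set X))ᶜ, isOpen_interior.isClosed_compl⟩, rfl⟩)
    · have h1 : {x : (Closeds X)ᵒᵈ | ¬ s ≤ x}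
          = {A : Closeds X | ¬ (A : Set X) ⊆ ((ofDual s : Closeds X) : Set X)} := by
        ext A
        simp only [Set.mem_setOf_eq]
        exact not_congr ⟨fun h => SetLike.coe_subset_coe.mpr (h : (ofDual A : Closeds X) ≤ ofDual s), fun h => (SetLike.coe_subset_coe.mp h : (ofDual A : Closeds X) ≤ ofDual s)⟩
      rw [h1]
      exact TopologicalSpace.GenerateOpen.basic _ (Or.inr ⟨(ofDual s : Closeds X), rfl⟩)
  · apply le_generateFrom
    rintro U (⟨C, rfl⟩ | ⟨C, rfl⟩)
    · have h1 : {A : Closeds X | (A : Set X) ∩ (C : Set X) = ∅}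
          = ⋃₀ {U : Set (Closeds X)ᵒᵈ | ∃ s : Closeds X, (s : Set X) ⊆ (↑C)ᶜ ∧
              U = {x : (Closeds X)ᵒᵈ | WayBelow (toDual s) x}} := by
        ext A
        simp only [Set.mem_sUnion, Set.mem_setOf_eq]
        constructor
        · intro h
          have hAC : (A : Set X) ⊆ (↑C)ᶜ := by
            intro p hp hpc; rw [Set.eq_empty_iff_forall_notMem] at h; exact h p ⟨hp, hpc⟩
          obtain ⟨V, hV, hAV, hVC⟩ := normal_exists_closure_subset A.2 C.2.isOpen_compl hAC
          refine ⟨_, ⟨⟨closure V, isClosed_closure⟩, hVC, rfl⟩, ?_⟩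
          exact (wayBelow_iff ⟨closure V, isClosed_closure⟩ A).mpr
            (hAV.trans (hV.subset_interior_iff.mpr subset_closure))
        · rintro ⟨_, ⟨s, hs, rfl⟩, hw⟩
          have hw' := (wayBelow_iff s A).mp hw
          rw [Set.eq_empty_iff_forall_notMem]
          rintro p ⟨hpA, hpC⟩
          exact hs (interior_subset (hw' hpA)) hpC
      rw [h1]
      exact TopologicalSpace.GenerateOpen.sUnion _
        (by rintro U ⟨s, hs, rfl⟩
            exact TopologicalSpace.GenerateOpen.basic _ (Or.inl ⟨toDual s, rfl⟩))
    · have h1 : {A : Closeds X | ¬ (A : Set X) ⊆ (C : Set X)}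
          = {x : (Closeds X)ᵒᵈ | ¬ toDual C ≤ x} := by
        ext A
        simp only [Set.mem_setOf_eq]
        exact not_congr ⟨fun h => (SetLike.coe_subset_coe.mp h : (A : Closeds X) ≤ C), fun h => SetLike.coe_subset_coe.mpr (h : (A : Closeds X) ≤ C)⟩
      rw [h1]
      exact TopologicalSpace.GenerateOpen.basic _ (Or.inr ⟨toDual C, rfl⟩)
end

section
/- For a compact Hausdorff space X, the set VX of closed subsets with operations: unit x ↦ {x}, functorial action by direct image (which preserves closedness since continuous images of compact sets are compact), and multiplication sending a closed family 𝒜 ∈ VVX to the union ⋃𝒜, satisfies the monad laws: the union of a closed (in the Vietoris topology) family of closed sets is closed, unit laws μ ∘ η_V = id and μ ∘ Vη = id hold, and μ is associative. -/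
open TopologicalSpace

universe u v

section Aux
variable {X : Type u} [TopologicalSpace X]

lemma vietoris_isOpen_plus (C : Closeds X) :
    @IsOpen _ (vietorisTopology X) {A : Closeds X | (A : Set X) ∩ (C : Set X) = ∅} :=
  TopologicalSpace.GenerateOpen.basic _ (Or.inl ⟨C, rfl⟩)

lemma vietoris_compactSpace [CompactSpace X] :
    @CompactSpace (Closeds X) (vietorisTopology X) := by
  letI : TopologicalSpace (Closeds X) := vietorisTopology X
  constructor
  rw [isCompact_iff_ultrafilter_le_nhds]
  intro F _
  set Lset : Set X := {x : X |
    ∀ U : Set X, IsOpen U → x ∈ U → {A : Closeds X | ((A : Set X) ∩ U).Nonempty} ∈ F} with hLset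
  have hclosed : IsClosed Lset := by
    rw [← isOpen_compl_iff]
    rw [isOpen_iff_forall_mem_open]
    intro x hx
    simp only [Lset, Set.mem_compl_iff, Set.mem_setOf_eq, not_forall] at hx
    obtain ⟨U, hU, hxU, hUF⟩ := hx
    exact ⟨U, fun y hy hyL => hUF (hyL U hU hy), hU, hxU⟩
  refine ⟨⟨Lset, hclosed⟩, Set.mem_univ _, ?_⟩
  show (F : Filter (Closeds X)) ≤ @nhds _ (vietorisTopology X) ⟨Lset, hclosed⟩
  rw [vietorisTopology, nhds_generateFrom]
  refine le_iInf₂ fun s hs => Filter.le_principal_iff.mpr ?_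
  obtain ⟨hLs, hsub⟩ := hs
  rcases hsub with ⟨C, rfl⟩ | ⟨C, rfl⟩
  · -- s = C⁺, L ∩ C = ∅
    simp only [Set.mem_setOf_eq] at hLs
    by_contra hnot
    have hT : {A : Closeds X | ((A : Set X) ∩ (C : Set X)).Nonempty} ∈ F := by
      have := (Ultrafilter.compl_mem_iff_notMem (f := F)).mpr hnot
      refine F.mem_of_superset this ?_
      intro A hA
      simpa [Set.nonempty_iff_ne_empty] using hA
    obtain ⟨A₀, hA₀⟩ := F.nonempty_of_mem hT
    classical
    set g : Closeds X → X := fun A =>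
      if h : ((A : Set X) ∩ (C : Set X)).Nonempty then h.choose else hA₀.choose with hg
    have hgC : ∀ A ∈ {A : Closeds X | ((A : Set X) ∩ (C : Set X)).Nonempty},
        g A ∈ (A : Set X) ∩ (C : Set X) := by
      intro A hA
      have hA' : ((A : Set X) ∩ (C : Set X)).Nonempty := hA
      show (if h : ((A : Set X) ∩ (C : Set X)).Nonempty then h.choose else hA₀.choose)
        ∈ (A : Set X) ∩ (C : Set X)
      rw [dif_pos hA']
      exact hA'.choose_spec
    obtain ⟨x, -, hx⟩ := isCompact_univ.ultrafilter_le_nhds (F.map g)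
      (by simp [Filter.le_principal_iff])
    have hxC : x ∈ (C : Set X) := by
      have hCmem : (C : Set X) ∈ F.map g :=
        Filter.mem_of_superset (Filter.image_mem_map hT)
          (by rintro _ ⟨A, hA, rfl⟩; exact (hgC A hA).2)
      have := mem_closure_iff_ultrafilter.mpr ⟨F.map g, hCmem, hx⟩
      rwa [C.isClosed.closure_eq] at this
    have hxL : x ∈ Lset := by
      intro U hU hxU
      have hUmem : g ⁻¹' U ∈ F := hx (hU.mem_nhds hxU)
      refine F.mem_of_superset (Filter.inter_mem hUmem hT) ?_
      rintro A ⟨hAU, hAT⟩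
      exact ⟨g A, (hgC A hAT).1, hAU⟩
    exact absurd hLs (by rw [Set.eq_empty_iff_forall_notMem] at *; intro h; exact h x ⟨hxL, hxC⟩)
  · -- s = C⁻, ¬ L ⊆ C
    simp only [Set.mem_setOf_eq] at hLs
    obtain ⟨x, hxL, hxC⟩ := Set.not_subset.mp hLs
    have hmem : {A : Closeds X | ((A : Set X) ∩ (C : Set X)ᶜ).Nonempty} ∈ F :=
      hxL _ C.isClosed.isOpen_compl hxC
    refine F.mem_of_superset hmem ?_
    rintro A ⟨y, hyA, hyC⟩
    exact fun hsub => hyC (hsub hyA)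

end Aux

/-- For a compact Hausdorff space `X`, the Vietoris construction on `VX`
(unit `x ↦ {x}`, action on maps by direct image, multiplication `𝒜 ↦ ⋃𝒜`) satisfies the
monad laws: the union of a Vietoris-closed family of closed sets is closed; direct images
of closed sets under continuous maps of compact Hausdorff spaces are closed; the unit laws
`μ ∘ η_V = id` and `μ ∘ Vη = id` hold; and `μ` is associative. -/
theorem vietoris_monad_laws (X : Type u) [TopologicalSpace X] [CompactSpace X] [T2Space X] :
    -- the union of a Vietoris-closed family of closed sets is closed
    (∀ 𝒜 : Set (Closeds X), @IsClosed _ (vietorisTopology X) 𝒜 →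
      IsClosed (⋃ A ∈ 𝒜, (A : Set X))) ∧
    -- direct images preserve closedness (functorial action is well defined)
    (∀ (Y : Type v) (_ : TopologicalSpace Y), CompactSpace Y → T2Space Y →
      ∀ f : X → Y, Continuous f → ∀ A : Closeds X, IsClosed (f '' (A : Set X))) ∧
    -- μ ∘ η_V = id : the union of the singleton family {A} is A
    (∀ A : Closeds X, (⋃ B ∈ ({A} : Set (Closeds X)), (B : Set X)) = (A : Set X)) ∧
    -- μ ∘ Vη = id : the union of the family of singletons of points of A is A
    (∀ A : Closeds X,
      (⋃ B ∈ {B : Closeds X | ∃ x ∈ (A : Set X), (B : Set X) = {x}}, (B : Set X))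
        = (A : Set X)) ∧
    -- associativity of μ
    (∀ 𝔄 : Set (Set (Closeds X)),
      (⋃ 𝒜 ∈ 𝔄, ⋃ A ∈ 𝒜, (A : Set X)) = ⋃ A ∈ ⋃₀ 𝔄, (A : Set X)) := by
  
  refine ⟨?_, ?_, ?_, ?_, ?_⟩
  · -- union of Vietoris-closed family is closed
    intro 𝒜 h𝒜
    letI : TopologicalSpace (Closeds X) := vietorisTopology X
    haveI : CompactSpace (Closeds X) := vietoris_compactSpace
    have hcomp : IsCompact 𝒜 := h𝒜.isCompact
    rw [← isOpen_compl_iff, isOpen_iff_forall_mem_open]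
    intro x hx
    simp only [Set.mem_compl_iff, Set.mem_iUnion, not_exists] at hx
    classical
    have hsep : ∀ A : Closeds X, ∃ UV : Set X × Set X, IsOpen UV.1 ∧ IsOpen UV.2 ∧
        (A ∈ 𝒜 → (A : Set X) ⊆ UV.1 ∧ x ∈ UV.2 ∧ Disjoint UV.1 UV.2) := by
      intro A
      by_cases hA : A ∈ 𝒜
      · obtain ⟨U, V, hU, hV, hAU, hxV, hUV⟩ :=
          normal_separation A.isClosed (isClosed_singleton (x := x))
            (Set.disjoint_singleton_right.mpr (hx A hA))
        exact ⟨(U, V), hU, hV, fun _ => ⟨hAU, hxV rfl, hUV⟩⟩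
      · exact ⟨(Set.univ, Set.univ), isOpen_univ, isOpen_univ, fun h => (hA h).elim⟩
    choose UV hU hV hP using hsep
    set W : Closeds X → Set (Closeds X) := fun A =>
      {B : Closeds X | (B : Set X) ∩ ((UV A).1)ᶜ = ∅} with hW
    have hWopen : ∀ A ∈ 𝒜, IsOpen (W A) := fun A _ =>
      vietoris_isOpen_plus ⟨((UV A).1)ᶜ, (hU A).isClosed_compl⟩
    have hcover : 𝒜 ⊆ ⋃ A ∈ 𝒜, W A := by
      intro B hB
      refine Set.mem_iUnion₂.mpr ⟨B, hB, ?_⟩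
      have := (hP B hB).1
      simp only [hW, Set.mem_setOf_eq]
      rw [Set.eq_empty_iff_forall_notMem]
      rintro y ⟨hyB, hyU⟩
      exact hyU (this hyB)
    obtain ⟨t, hts, htfin, htcov⟩ := hcomp.elim_finite_subcover_image hWopen hcover
    refine ⟨⋂ A ∈ t, (UV A).2, ?_, htfin.isOpen_biInter (fun A hA => hV A), ?_⟩
    · intro y hy
      simp only [Set.mem_iInter] at hy
      simp only [Set.mem_compl_iff, Set.mem_iUnion, not_exists]
      intro B hB hyB
      obtain ⟨A, hAt, hBA⟩ := Set.mem_iUnion₂.mp (htcov hB)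
      have hBU : (B : Set X) ⊆ (UV A).1 := by
        intro z hz
        by_contra hz'
        exact (Set.eq_empty_iff_forall_notMem.mp hBA) z ⟨hz, hz'⟩
      exact ((hP A (hts hAt)).2.2).le_bot ⟨hBU hyB, hy A hAt⟩
    · exact Set.mem_iInter₂.mpr fun A hA => (hP A (hts hA)).2.1
  · intro Y _ hCY hT2Y f hf A
    haveI := hCY; haveI := hT2Y
    exact (A.isClosed.isCompact.image hf).isClosed
  · intro A; simp
  · intro A
    ext y
    simp only [Set.mem_iUnion, Set.mem_setOf_eq]
    constructor
    · rintro ⟨B, ⟨z, hz, hB⟩, hyB⟩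
      rw [hB] at hyB
      rwa [Set.mem_singleton_iff.mp hyB]
    · intro hy
      exact ⟨⟨{y}, isClosed_singleton⟩, ⟨y, hy, rfl⟩, rfl⟩
  · intro 𝔄
    ext y
    simp only [Set.mem_iUnion, Set.mem_sUnion]
    constructor
    · rintro ⟨𝒜, h𝒜, A, hA, hy⟩
      exact ⟨A, ⟨𝒜, h𝒜, hA⟩, hy⟩
    · rintro ⟨A, ⟨𝒜, h𝒜, hA⟩, hy⟩
      exact ⟨𝒜, h𝒜, A, hA, hy⟩
end

section
/- The weak distributive law δ : βP ⇒ Pβ with δ_X(𝐅) = {F ∈ βX : ⋃𝒜 ∈ F for all 𝒜 ∈ 𝐅} satisfies the multiplicativity axiom with respect to the ultrafilter monad: δ_X ∘ μ^β_{PX} = P(μ^β_X) ∘ δ_{βX} ∘ β(δ_X) as maps ββPX → PβX. -/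
/-- The multiplication of the ultrafilter monad. -/
def ultrafilterJoin {α : Type*} (G : Ultrafilter (Ultrafilter α)) : Ultrafilter α :=
  G.bind id

open Set Filter

/-- FIP helper: two ⊆-directed nonempty families whose members pairwise meet
generate a proper filter, hence an ultrafilter containing all of them. -/
lemma exists_ultrafilter_of_directed_pair {α : Type*} (C D : Set (Set α))
    (hCne : C.Nonempty) (hDne : D.Nonempty)
    (hC : ∀ s ∈ C, ∀ t ∈ C, ∃ u ∈ C, u ⊆ s ∩ t)
    (hD : ∀ s ∈ D, ∀ t ∈ D, ∃ u ∈ D, u ⊆ s ∩ t)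
    (h : ∀ s ∈ C, ∀ t ∈ D, (s ∩ t).Nonempty) :
    ∃ U : Ultrafilter α, ∀ s ∈ C ∪ D, s ∈ U := by
  have claim : ∀ t : Set (Set α), t.Finite → t ⊆ C ∪ D →
      ∃ s ∈ C, ∃ d ∈ D, s ∩ d ⊆ ⋂₀ t := by
    intro t ht
    refine Set.Finite.induction_on
      (motive := fun t _ => t ⊆ C ∪ D → ∃ s ∈ C, ∃ d ∈ D, s ∩ d ⊆ ⋂₀ t) t ht ?_ ?_
    · intro _
      obtain ⟨s, hs⟩ := hCne; obtain ⟨d, hd⟩ := hDne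
      exact ⟨s, hs, d, hd, by simp⟩
    · intro a tt ha hfin ih hsub
      obtain ⟨s, hs, d, hd, hsd⟩ := ih (fun x hx => hsub (Set.mem_insert_of_mem _ hx))
      rcases hsub (Set.mem_insert _ _) with hac | had
      · obtain ⟨u, hu, huss⟩ := hC s hs a hac
        refine ⟨u, hu, d, hd, ?_⟩
        rw [Set.sInter_insert]
        intro x hx
        exact ⟨(huss hx.1).2, hsd ⟨(huss hx.1).1, hx.2⟩⟩
      · obtain ⟨u, hu, huss⟩ := hD d hd a had
        refine ⟨s, hs, u, hu, ?_⟩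
        rw [Set.sInter_insert]
        intro x hx
        exact ⟨(huss hx.2).2, hsd ⟨hx.1, (huss hx.2).1⟩⟩
  have hne : (Filter.generate (C ∪ D)).NeBot := by
    rw [Filter.generate_neBot_iff]
    intro t hsub hfin
    obtain ⟨s, hs, d, hd, hsd⟩ := claim t hfin hsub
    exact (h s hs d hd).mono hsd
  obtain ⟨U, hU⟩ := Ultrafilter.exists_le (Filter.generate (C ∪ D))
  exact ⟨U, fun s hs => hU (Filter.mem_generate_of_mem hs)⟩

lemma mem_ultrafilterJoin {α : Type*} {G : Ultrafilter (Ultrafilter α)} {s : Set α} :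
    s ∈ ultrafilterJoin G ↔ {F : Ultrafilter α | s ∈ F} ∈ G :=
  Filter.mem_bind'


/-- Key lemma: if `F` contains `⋃₀𝒜` for all `𝒜` in the join of `G`, then for any
`S` whose `δ`-preimage is in `G` and any `A ∈ F`, some ultrafilter in `⋃₀ S` contains `A`. -/
lemma key_meets {X : Type*} (G : Ultrafilter (Ultrafilter (Set X)))
    (F : Ultrafilter X)
    (hF : ∀ 𝒜 ∈ ultrafilterJoin G, ⋃₀ 𝒜 ∈ F)
    (S : Set (Set (Ultrafilter X)))
    (hS : {FF | ultrafilterPowersetDelta X FF ∈ S} ∈ G)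
    (A : Set X) (hA : A ∈ F) :
    ∃ F' : Ultrafilter X, F' ∈ ⋃₀ S ∧ A ∈ F' := by
  set 𝒜s : Set (Set X) := {B | (B ∩ A).Nonempty} with h𝒜s
  by_cases hM : {FF : Ultrafilter (Set X) | 𝒜s ∈ FF} ∈ G
  · obtain ⟨FF, hFF1, hFF2⟩ := Ultrafilter.nonempty_of_mem (Filter.inter_mem hS hM)
    obtain ⟨U, hU⟩ := exists_ultrafilter_of_directed_pair
      (α := X) {s | ∃ 𝒜 ∈ FF, s = ⋃₀ 𝒜} {s | A ⊆ s}
      ⟨⋃₀ Set.univ, Set.univ, Filter.univ_mem, rfl⟩ ⟨Set.univ, Set.subset_univ _⟩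
      (by
        rintro s ⟨𝒜₁, h𝒜₁, rfl⟩ t ⟨𝒜₂, h𝒜₂, rfl⟩
        refine ⟨⋃₀ (𝒜₁ ∩ 𝒜₂), ⟨𝒜₁ ∩ 𝒜₂, Filter.inter_mem h𝒜₁ h𝒜₂, rfl⟩, ?_⟩
        exact Set.subset_inter (Set.sUnion_mono Set.inter_subset_left)
          (Set.sUnion_mono Set.inter_subset_right))
      (by
        rintro s hs t ht
        exact ⟨s ∩ t, Set.subset_inter hs ht, le_refl _⟩)
      (by
        rintro s ⟨𝒜, h𝒜, rfl⟩ t ht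
        obtain ⟨B, hB1, hB2⟩ := Ultrafilter.nonempty_of_mem (Filter.inter_mem h𝒜 hFF2)
        obtain ⟨x, hxB, hxA⟩ := hB2
        exact ⟨x, ⟨B, hB1, hxB⟩, ht hxA⟩)
    refine ⟨U, ⟨ultrafilterPowersetDelta X FF, hFF1, ?_⟩, ?_⟩
    · intro 𝒜 h𝒜
      exact hU _ (Or.inl ⟨𝒜, h𝒜, rfl⟩)
    · exact hU A (Or.inr (le_refl A))
  · have hMc : {FF : Ultrafilter (Set X) | 𝒜sᶜ ∈ FF} ∈ G := by
      have := (Ultrafilter.compl_mem_iff_notMem (f := G)).2 hM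
      convert this using 1
      ext FF
      simp [Ultrafilter.compl_mem_iff_notMem]
    have h2 : ⋃₀ (𝒜sᶜ) ∈ F := hF _ (mem_ultrafilterJoin.2 hMc)
    obtain ⟨x, ⟨B, hB, hxB⟩, hxA⟩ := Ultrafilter.nonempty_of_mem (Filter.inter_mem h2 hA)
    exact absurd ⟨x, hxB, hxA⟩ hB

/-- the weak distributive law `δ : βP ⇒ Pβ` satisfies the multiplicativity
axiom for the ultrafilter monad: `δ_X ∘ μ^β_{PX} = P(μ^β_X) ∘ δ_{βX} ∘ β(δ_X)` as maps
`ββPX → PβX`. -/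
theorem delta_mult_compatibility {X : Type*} (G : Ultrafilter (Ultrafilter (Set X))) :
    ultrafilterPowersetDelta X (ultrafilterJoin G)
      = ultrafilterJoin ''
          (ultrafilterPowersetDelta (Ultrafilter X)
            (Ultrafilter.map (fun FF => ultrafilterPowersetDelta X FF) G)) := by
  ext F
  constructor
  · intro hF
    have hF' : ∀ 𝒜 ∈ ultrafilterJoin G, ⋃₀ 𝒜 ∈ F := hF
    obtain ⟨H, hH⟩ := exists_ultrafilter_of_directed_pair
      (α := Ultrafilter X)
      {s | ∃ S : Set (Set (Ultrafilter X)),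
        {FF | ultrafilterPowersetDelta X FF ∈ S} ∈ G ∧ s = ⋃₀ S}
      {s | ∃ A ∈ F, s = {F' : Ultrafilter X | A ∈ F'}}
      ⟨⋃₀ Set.univ, Set.univ, by exact Filter.mem_of_superset Filter.univ_mem fun _ _ => Set.mem_univ _, rfl⟩
      ⟨{F' : Ultrafilter X | Set.univ ∈ F'}, Set.univ, Filter.univ_mem, rfl⟩
      (by
        rintro s ⟨S₁, hS₁, rfl⟩ t ⟨S₂, hS₂, rfl⟩
        refine ⟨⋃₀ (S₁ ∩ S₂), ⟨S₁ ∩ S₂, ?_, rfl⟩, ?_⟩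
        · exact Filter.inter_mem hS₁ hS₂
        · exact Set.subset_inter (Set.sUnion_mono Set.inter_subset_left)
            (Set.sUnion_mono Set.inter_subset_right))
      (by
        rintro s ⟨A₁, hA₁, rfl⟩ t ⟨A₂, hA₂, rfl⟩
        refine ⟨{F' : Ultrafilter X | A₁ ∩ A₂ ∈ F'}, ⟨A₁ ∩ A₂, Filter.inter_mem hA₁ hA₂, rfl⟩, ?_⟩
        intro F' hF'
        exact ⟨Filter.mem_of_superset hF' Set.inter_subset_left,
          Filter.mem_of_superset hF' Set.inter_subset_right⟩)
      (by
        rintro s ⟨S, hS, rfl⟩ t ⟨A, hA, rfl⟩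
        obtain ⟨F', h1, h2⟩ := key_meets G F hF' S hS A hA
        exact ⟨F', h1, h2⟩)
    refine ⟨H, ?_, ?_⟩
    · intro 𝒮 h𝒮
      rw [Ultrafilter.mem_map] at h𝒮
      exact hH _ (Or.inl ⟨𝒮, h𝒮, rfl⟩)
    · have hle : (ultrafilterJoin H : Filter X) ≤ F := by
        intro A hA
        exact mem_ultrafilterJoin.2 (hH _ (Or.inr ⟨A, hA, rfl⟩))
      exact Ultrafilter.coe_le_coe.1 hle
  · rintro ⟨H, hH, rfl⟩
    intro 𝒜 h𝒜
    have hT : {FF : Ultrafilter (Set X) | 𝒜 ∈ FF} ∈ G := mem_ultrafilterJoin.1 h𝒜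
    have h𝒮 : (𝒫 {F' : Ultrafilter X | ⋃₀ 𝒜 ∈ F'}) ∈
        Ultrafilter.map (fun FF => ultrafilterPowersetDelta X FF) G := by
      rw [Ultrafilter.mem_map]
      refine Filter.mem_of_superset hT ?_
      intro FF hFF F' hF'
      exact hF' 𝒜 hFF
    have := hH _ h𝒮
    refine mem_ultrafilterJoin.2 (Filter.mem_of_superset this ?_)
    intro F' hF'
    obtain ⟨u, hu, hF'u⟩ := hF'
    exact hu hF'u
end
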